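/- Let q = 2^ℓ, let d2 > d1 > 1 be integers with d2 + 1 > 2·d1, let a_1, …, a_{d1} ∈ 𝔽_q with a_{d1} ≠ 0, and let b_1, …, b_{d2} ∈ 𝔽_q with b_{d2} ≠ 0. Then the polynomial (X2 + X4)² + (X2 + X4)·Σ_{i=1}^{d1} a_i·(X1^i + X3^i) + (X1 + X3)·Σ_{i=1}^{d2} b_i·(X1^i + X3^i) is irreducible in \bar{𝔽}_q[X1, X2, X3, X4], where \bar{𝔽}_q is an algebraic closure of 𝔽_q. -/

import Mathlib

section Aux1
open Polynomial
lemma aux_quad_irred {R : Type*} [CommRing R] [IsDomain R] [UniqueFactorizationMonoid R]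
    (A c : R) (h : ∀ r : R, r * r + A * r + c ≠ 0) :
    Irreducible (X ^ 2 + C A * X + C c) := by
  set f : R[X] := X ^ 2 + C A * X + C c with hf
  have hrest : (C A * X + C c).degree < 2 := lt_of_le_of_lt degree_linear_le (by norm_num)
  have hmonic : f.Monic := by
    have := monic_X_pow_add (p := C A * X + C c) (n := 2) hrest
    simpa [hf, add_assoc] using this
  have hdeg : f.degree = 2 := by
    rw [hf, add_assoc, degree_add_eq_left_of_degree_lt (by simpa using hrest)]
    exact degree_X_pow 2
  rw [hmonic.irreducible_iff_irreducible_map_fraction_map (K := FractionRing R)]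
  set L := FractionRing R
  set fm := f.map (algebraMap R L) with hfm
  have hfmmonic : fm.Monic := hmonic.map _
  have hfmdeg : fm.degree = 2 := by rw [hfm, hmonic.degree_map]; exact hdeg
  by_contra hred
  have hfm0 : fm ≠ 0 := hfmmonic.ne_zero
  have hfmnu : ¬ IsUnit fm := by
    intro hu
    rw [isUnit_iff_degree_eq_zero, hfmdeg] at hu
    exact two_ne_zero hu
  obtain ⟨q, hqirr, hqdvd⟩ := WfDvdMonoid.exists_irreducible_factor hfmnu hfm0
  obtain ⟨t, ht⟩ := hqdvd
  have hq0 : q ≠ 0 := fun h0 => hfm0 (by rw [ht, h0, zero_mul])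
  have ht0 : t ≠ 0 := fun h0 => hfm0 (by rw [ht, h0, mul_zero])
  have htnu : ¬ IsUnit t := fun hu =>
    hred (by rw [ht]; exact (associated_mul_unit_right q t hu).irreducible hqirr)
  have hfmnat : fm.natDegree = 2 := natDegree_eq_of_degree_eq_some hfmdeg
  have hqdeg : q.degree = 1 := by
    have hsum : q.natDegree + t.natDegree = 2 := by
      rw [← natDegree_mul hq0 ht0, ← ht, hfmnat]
    have hq1 : 1 ≤ q.natDegree := by
      rcases Nat.eq_zero_or_pos q.natDegree with h0 | h1
      · exact absurd (isUnit_iff_degree_eq_zero.mpr (by rw [degree_eq_natDegree hq0, h0]; rfl))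
          hqirr.not_isUnit
      · exact h1
    have ht1 : 1 ≤ t.natDegree := by
      rcases Nat.eq_zero_or_pos t.natDegree with h0 | h1
      · exact absurd (isUnit_iff_degree_eq_zero.mpr (by rw [degree_eq_natDegree ht0, h0]; rfl)) htnu
      · exact h1
    rw [degree_eq_natDegree hq0]
    norm_cast
    omega
  obtain ⟨z, hz⟩ : ∃ z : L, q.eval z = 0 := by
    have h1 : q.coeff 1 ≠ 0 := by
      have : q.natDegree = 1 := natDegree_eq_of_degree_eq_some hqdeg
      rw [show (1:ℕ) = q.natDegree from this.symm]
      exact fun h0 => hq0 (leadingCoeff_eq_zero.mp h0)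
    refine ⟨-(q.coeff 0 / q.coeff 1), ?_⟩
    have hq : q = C (q.coeff 1) * X + C (q.coeff 0) := eq_X_add_C_of_degree_le_one hqdeg.le
    rw [hq]
    simp
    rw [mul_neg, mul_div_cancel₀ _ h1, neg_add_cancel]
  have hzfm : fm.eval z = 0 := by rw [ht, eval_mul, hz, zero_mul]
  -- z is integral over R
  have hint : IsIntegral R z := ⟨f, hmonic, by rwa [← eval_map]⟩
  obtain ⟨r, hr⟩ := IsIntegrallyClosed.isIntegral_iff.mp hint
  refine h r ?_
  have : algebraMap R L (r * r + A * r + c) = 0 := by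
    rw [← hzfm, hfm]
    rw [eval_map, hf]
    simp [← hr]
    ring
  exact IsFractionRing.injective R L (by rw [map_zero (algebraMap R L)]; exact this)
end Aux1
section Aux2
open Polynomial Finset
lemma aux_no_sol {K : Type*} [Field K] [CharP K 2] {d1 d2 : ℕ}
    (hd1 : 1 < d1) (hd2 : d1 < d2) (hdeg : 2 * d1 < d2 + 1)
    (α β : ℕ → K) (hb : β d2 ≠ 0) (R : Polynomial (Polynomial K))
    (hE : R * R
        + (∑ i ∈ Icc 1 d1, C (C (α i) * (1 + X ^ i)) * X ^ i) * R
        + ∑ i ∈ Icc 1 d2, C (C (β i) * ((1 + X) * (1 + X ^ i))) * X ^ (i + 1) = 0) :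
    False := by
  set γ : ℕ → Polynomial K := fun i => C (β i) * ((1 + X) * (1 + X ^ i)) with hγ
  set Ah : Polynomial (Polynomial K) := ∑ i ∈ Icc 1 d1, C (C (α i) * (1 + X ^ i)) * X ^ i with hAh
  set Ch : Polynomial (Polynomial K) := ∑ i ∈ Icc 1 d2, C (γ i) * X ^ (i + 1) with hCh
  have hAdeg : Ah.natDegree ≤ d1 := by
    refine natDegree_sum_le_of_forall_le _ _ (fun i hi => ?_)
    refine (natDegree_C_mul_le _ _).trans ?_
    rw [natDegree_X_pow]
    exact (mem_Icc.mp hi).2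
  have hCdeg : Ch.natDegree ≤ d2 + 1 := by
    refine natDegree_sum_le_of_forall_le _ _ (fun i hi => ?_)
    refine (natDegree_C_mul_le _ _).trans ?_
    rw [natDegree_X_pow]
    exact Nat.succ_le_succ (mem_Icc.mp hi).2
  have hCtop : Ch.coeff (d2 + 1) = γ d2 := by
    rw [hCh, finset_sum_coeff]
    rw [Finset.sum_eq_single d2]
    · simp [coeff_C_mul, coeff_X_pow]
    · intro i hi hne
      simp [coeff_C_mul, coeff_X_pow, (show ¬ (d2 + 1 = i + 1) by omega), (show ¬ (d2 = i) by omega)]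
    · intro habs
      exact absurd (mem_Icc.mpr ⟨by omega, le_rfl⟩) habs
  have hγ1 : (γ d2).coeff 1 = β d2 := by
    have hexp : ((1 + X : Polynomial K) * (1 + X ^ d2)) = 1 + X + (X ^ d2 + X ^ (d2 + 1)) := by ring
    rw [hγ]
    simp only [coeff_C_mul, hexp, coeff_add, coeff_one, coeff_X_one, coeff_X_pow,
      (show ¬ ((1:ℕ) = 0) by omega), (show ¬ ((1:ℕ) = d2) by omega),
      (show ¬ ((1:ℕ) = d2 + 1) by omega), if_false, if_true]
    simp
  have hγ0 : γ d2 ≠ 0 := by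
    intro h0
    have := congrArg (fun p => Polynomial.coeff p 1) h0
    simp only [hγ1, coeff_zero] at this
    exact hb this
  have hco : ∀ m, (R * R).coeff m + (Ah * R).coeff m + Ch.coeff m = 0 := by
    intro m
    have := congrArg (fun p => Polynomial.coeff p m) hE
    simpa using this
  set n := R.natDegree with hn
  have hRR : (R * R).natDegree ≤ n + n := natDegree_mul_le
  have hAR : (Ah * R).natDegree ≤ d1 + n := natDegree_mul_le.trans (Nat.add_le_add_right hAdeg n)
  by_cases hcase : n ≤ d1
  · have h1 : (R * R).coeff (d2 + 1) = 0 :=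
      coeff_eq_zero_of_natDegree_lt (lt_of_le_of_lt hRR (by omega))
    have h2 : (Ah * R).coeff (d2 + 1) = 0 :=
      coeff_eq_zero_of_natDegree_lt (lt_of_le_of_lt hAR (by omega))
    have := hco (d2 + 1)
    rw [h1, h2, hCtop] at this
    simp at this
    exact hγ0 this
  · push_neg at hcase
    have hR0 : R ≠ 0 := by
      intro h0
      rw [h0] at hn
      simp [natDegree_zero] at hn
      omega
    rcases lt_trichotomy (n + n) (d2 + 1) with hlt | heq | hgt
    · have h1 : (R * R).coeff (d2 + 1) = 0 :=
        coeff_eq_zero_of_natDegree_lt (lt_of_le_of_lt hRR hlt)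
      have h2 : (Ah * R).coeff (d2 + 1) = 0 :=
        coeff_eq_zero_of_natDegree_lt (lt_of_le_of_lt hAR (by omega))
      have := hco (d2 + 1)
      rw [h1, h2, hCtop] at this
      simp at this
      exact hγ0 this
    · -- n + n = d2 + 1
      have h1 : (R * R).coeff (n + n) = R.leadingCoeff * R.leadingCoeff := by
        have := coeff_mul_degree_add_degree R R
        simpa [hn] using this
      have h2 : (Ah * R).coeff (n + n) = 0 :=
        coeff_eq_zero_of_natDegree_lt (lt_of_le_of_lt hAR (by omega))
      have key := hco (n + n)
      rw [h1, h2, heq, hCtop, add_zero] at key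
      have hc1 := congrArg (fun p => Polynomial.coeff p 1) key
      simp only [coeff_add, hγ1, coeff_zero] at hc1
      have hsq : (R.leadingCoeff * R.leadingCoeff).coeff 1 = 0 := by
        rw [Polynomial.coeff_mul, Finset.Nat.sum_antidiagonal_eq_sum_range_succ_mk]
        rw [Finset.sum_range_succ, Finset.sum_range_one]
        simp only [Nat.sub_zero, Nat.sub_self]
        rw [mul_comm (R.leadingCoeff.coeff 1)]
        exact CharTwo.add_self_eq_zero _
      rw [hsq, zero_add] at hc1
      exact hb hc1
    · have h2 : (Ah * R).coeff (n + n) = 0 :=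
        coeff_eq_zero_of_natDegree_lt (lt_of_le_of_lt hAR (by omega))
      have h3 : Ch.coeff (n + n) = 0 :=
        coeff_eq_zero_of_natDegree_lt (lt_of_le_of_lt hCdeg hgt)
      have h1 : (R * R).coeff (n + n) = R.leadingCoeff * R.leadingCoeff := by
        have := coeff_mul_degree_add_degree R R
        simpa [hn] using this
      have := hco (n + n)
      rw [h1, h2, h3, add_zero, add_zero] at this
      exact hR0 (leadingCoeff_eq_zero.mp (by
        rcases mul_eq_zero.mp this with h | h <;> exact h))
end Aux2

section AuxDefs
variable (K : Type) [Field K]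

noncomputable def auxPhi : MvPolynomial (Fin 4) K →ₐ[K] Polynomial (MvPolynomial (Fin 3) K) :=
  MvPolynomial.aeval ![Polynomial.C (MvPolynomial.X 2), Polynomial.C (MvPolynomial.X 0),
    Polynomial.C (MvPolynomial.X 1), Polynomial.X]

noncomputable def auxPsi : Polynomial (MvPolynomial (Fin 3) K) →ₐ[K] MvPolynomial (Fin 4) K :=
  Polynomial.aevalTower (MvPolynomial.aeval ![MvPolynomial.X 1, MvPolynomial.X 2, MvPolynomial.X 0])
    (MvPolynomial.X 3)

lemma auxPsiPhi : (auxPsi K).comp (auxPhi K) = AlgHom.id K (MvPolynomial (Fin 4) K) := by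
  apply MvPolynomial.algHom_ext
  intro i
  fin_cases i <;>
    simp [auxPhi, auxPsi, Polynomial.aevalTower_X, Polynomial.aevalTower_C]

lemma auxPhiPsi : (auxPhi K).comp (auxPsi K) = AlgHom.id K (Polynomial (MvPolynomial (Fin 3) K)) := by
  apply Polynomial.algHom_ext'
  · apply MvPolynomial.algHom_ext
    intro j
    fin_cases j <;>
      simp [auxPhi, auxPsi, Polynomial.aevalTower_X, Polynomial.aevalTower_C, Polynomial.CAlgHom]
  · simp [auxPhi, auxPsi, Polynomial.aevalTower_X]

noncomputable def auxEqv : MvPolynomial (Fin 4) K ≃ₐ[K] Polynomial (MvPolynomial (Fin 3) K) :=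
  AlgEquiv.ofAlgHom (auxPhi K) (auxPsi K) (auxPhiPsi K) (auxPsiPhi K)

lemma auxEqv_apply (p : MvPolynomial (Fin 4) K) : auxEqv K p = auxPhi K p := rfl

end AuxDefs

open MvPolynomial Finset

/-- Variables: `X 0 = X1`, `X 1 = X2`, `X 2 = X3`, `X 3 = X4`. -/
theorem stmt_19
    (ℓ : ℕ) (hℓ : 0 < ℓ)
    (F : Type) [Field F] [Fintype F] [CharP F 2]
    (hcard : Fintype.card F = 2 ^ ℓ)
    (d1 d2 : ℕ) (hd1 : 1 < d1) (hd2 : d1 < d2) (hdeg : 2 * d1 < d2 + 1)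
    (a : ℕ → F) (had1 : a d1 ≠ 0)
    (b : ℕ → F) (hbd2 : b d2 ≠ 0) :
    Irreducible
      (((X 1 + X 3) ^ 2
        + (X 1 + X 3) * ∑ i ∈ Finset.Icc 1 d1,
            C (algebraMap F (AlgebraicClosure F) (a i)) * (X 0 ^ i + X 2 ^ i)
        + (X 0 + X 2) * ∑ i ∈ Finset.Icc 1 d2,
            C (algebraMap F (AlgebraicClosure F) (b i)) * (X 0 ^ i + X 2 ^ i))
        : MvPolynomial (Fin 4) (AlgebraicClosure F)) := by
  classical
  set K := AlgebraicClosure F with hK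
  haveI hch : CharP K 2 := charP_of_injective_algebraMap (algebraMap F K).injective 2
  set a' : ℕ → K := fun i => algebraMap F K (a i) with ha'
  set b' : ℕ → K := fun i => algebraMap F K (b i) with hb'
  set P : MvPolynomial (Fin 4) K :=
    (X 1 + X 3) ^ 2
      + (X 1 + X 3) * ∑ i ∈ Finset.Icc 1 d1, C (a' i) * (X 0 ^ i + X 2 ^ i)
      + (X 0 + X 2) * ∑ i ∈ Finset.Icc 1 d2, C (b' i) * (X 0 ^ i + X 2 ^ i) with hP
  set A : MvPolynomial (Fin 3) K := ∑ i ∈ Icc 1 d1, C (a' i) * (X 2 ^ i + X 1 ^ i) with hA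
  set Bq : MvPolynomial (Fin 3) K := ∑ i ∈ Icc 1 d2, C (b' i) * (X 2 ^ i + X 1 ^ i) with hBq
  -- the image of the sums under auxPhi
  have hphiC : ∀ k : K, auxPhi K (C k) = Polynomial.C (C k) := by
    intro k
    rw [show (C k : MvPolynomial (Fin 4) K) = algebraMap K _ k from rfl, AlgHom.commutes,
      Polynomial.algebraMap_apply, MvPolynomial.algebraMap_eq]
  have hphisum : ∀ (n : ℕ) (co : ℕ → K),
      auxPhi K (∑ i ∈ Icc 1 n, C (co i) * (X 0 ^ i + X 2 ^ i))
        = Polynomial.C (∑ i ∈ Icc 1 n, C (co i) * (X 2 ^ i + X 1 ^ i)) := by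
    intro n co
    rw [map_sum, map_sum]
    refine Finset.sum_congr rfl fun i _ => ?_
    rw [map_mul, map_add, map_pow, map_pow, hphiC]
    rw [show auxPhi K (X 0) = Polynomial.C (X 2) by simp [auxPhi]]
    rw [show auxPhi K (X 2) = Polynomial.C (X 1) by simp [auxPhi]]
    simp only [Polynomial.C_mul, Polynomial.C_add, Polynomial.C_pow]
  have h2z : (2 : Polynomial (MvPolynomial (Fin 3) K)) = 0 := by
    have h1 : (2 : MvPolynomial (Fin 3) K) = 0 := by
      have := CharP.cast_eq_zero (MvPolynomial (Fin 3) K) 2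
      simpa using this
    rw [← map_ofNat (Polynomial.C (R := MvPolynomial (Fin 3) K)) 2, h1, map_zero]
  have heP : auxEqv K P = Polynomial.X ^ 2 + Polynomial.C A * Polynomial.X + Polynomial.C (X 0 ^ 2 + X 0 * A + (X 2 + X 1) * Bq) := by
    rw [auxEqv_apply, hP]
    simp only [map_add, map_mul, map_pow]
    rw [hphisum d1 a', hphisum d2 b', ← hA, ← hBq]
    rw [show auxPhi K (X 0) = Polynomial.C (X 2) by simp [auxPhi]]
    rw [show auxPhi K (X 1) = Polynomial.C (X 0) by simp [auxPhi]]
    rw [show auxPhi K (X 2) = Polynomial.C (X 1) by simp [auxPhi]]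
    rw [show auxPhi K (X 3) = Polynomial.X by simp [auxPhi]]
    linear_combination (Polynomial.C (X 0 : MvPolynomial (Fin 3) K) * Polynomial.X) * h2z
  -- irreducibility of the quadratic
  have hb'0 : b' d2 ≠ 0 := by
    intro h0
    rw [hb'] at h0
    exact hbd2 ((algebraMap F K).injective (by rw [map_zero]; exact h0))
  have hirr2 : Irreducible (Polynomial.X ^ 2 + Polynomial.C A * Polynomial.X + Polynomial.C (X 0 ^ 2 + X 0 * A + (X 2 + X 1) * Bq)) := by
    apply aux_quad_irred
    intro r hr
    set Φ : MvPolynomial (Fin 3) K →ₐ[K] Polynomial (Polynomial K) :=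
      MvPolynomial.aeval ![0, Polynomial.X * Polynomial.C Polynomial.X, Polynomial.X] with hΦ
    have hΦC : ∀ k : K, Φ (C k) = Polynomial.C (Polynomial.C k) := by
      intro k
      rw [show (C k : MvPolynomial (Fin 3) K) = algebraMap K _ k from rfl, AlgHom.commutes,
        Polynomial.algebraMap_apply, Polynomial.algebraMap_apply, Algebra.algebraMap_self_apply]
    have hΦA : Φ A = ∑ i ∈ Icc 1 d1,
        Polynomial.C (Polynomial.C (a' i) * (1 + Polynomial.X ^ i)) * Polynomial.X ^ i := by
      rw [hA, map_sum]
      refine Finset.sum_congr rfl fun i _ => ?_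
      rw [map_mul, map_add, map_pow, map_pow, hΦC]
      rw [show Φ (X 2) = Polynomial.X by simp [hΦ]]
      rw [show Φ (X 1) = Polynomial.X * Polynomial.C Polynomial.X by simp [hΦ]]
      simp only [Polynomial.C_mul, Polynomial.C_add, Polynomial.C_1, Polynomial.C_pow]
      ring
    have hΦc : Φ (X 0 ^ 2 + X 0 * A + (X 2 + X 1) * Bq) = ∑ i ∈ Icc 1 d2,
        Polynomial.C (Polynomial.C (b' i) * ((1 + Polynomial.X) * (1 + Polynomial.X ^ i)))
          * Polynomial.X ^ (i + 1) := by
      rw [map_add, map_add, map_pow, map_mul, map_mul, map_add]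
      rw [show Φ (X 0) = 0 by simp [hΦ]]
      rw [show Φ (X 2) = Polynomial.X by simp [hΦ]]
      rw [show Φ (X 1) = Polynomial.X * Polynomial.C Polynomial.X by simp [hΦ]]
      rw [zero_pow (by norm_num : (2:ℕ) ≠ 0), zero_mul, zero_add, zero_add]
      rw [hBq, map_sum, Finset.mul_sum]
      refine Finset.sum_congr rfl fun i _ => ?_
      rw [map_mul, map_add, map_pow, map_pow, hΦC]
      rw [show Φ (X 2) = Polynomial.X by simp [hΦ]]
      rw [show Φ (X 1) = Polynomial.X * Polynomial.C Polynomial.X by simp [hΦ]]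
      simp only [Polynomial.C_mul, Polynomial.C_add, Polynomial.C_1, Polynomial.C_pow]
      ring
    have hEq := congrArg Φ hr
    rw [map_add, map_add, map_mul, map_mul, map_zero, hΦA, hΦc] at hEq
    exact aux_no_sol hd1 hd2 hdeg a' b' hb'0 (Φ r) hEq
  have hPirr : Irreducible (auxEqv K P) := by rw [heP]; exact hirr2
  exact (MulEquiv.irreducible_iff (auxEqv K)).mp hPirr
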